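/- The antipode S of a co-Frobenius Hopf algebra H over a field k (equivalently, of a Hopf algebra with nonzero left integral) is bijective. -/

import Mathlib

open TensorProduct LinearMap MulOpposite Coalgebra

noncomputable section

/-- The dual algebra `C* = Hom_K(C, K)` of a coalgebra `C`, with the convolution product. -/
def DualAlg (K C : Type) [Field K] [AddCommGroup C] [Module K C] : Type := C →ₗ[K] K

namespace DualAlg

variable (K C : Type) [Field K] [AddCommGroup C] [Module K C]

instance : AddCommGroup (DualAlg K C) := inferInstanceAs (AddCommGroup (C →ₗ[K] K))
instance : Module K (DualAlg K C) := inferInstanceAs (Module K (C →ₗ[K] K))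

variable {K C}

/-- View an element of the dual algebra as a linear map. -/
def toLin (f : DualAlg K C) : C →ₗ[K] K := f

/-- View a linear map as an element of the dual algebra. -/
def ofLin (f : C →ₗ[K] K) : DualAlg K C := f

instance : FunLike (DualAlg K C) C K where
  coe f := f.toLin
  coe_injective := fun _ _ h => DFunLike.coe_injective (F := C →ₗ[K] K) h

@[ext] lemma ext {f g : DualAlg K C} (h : ∀ c, f c = g c) : f = g := DFunLike.ext _ _ h

@[simp] lemma toLin_apply (f : DualAlg K C) (c : C) : f.toLin c = f c := rfl
@[simp] lemma ofLin_apply (f : C →ₗ[K] K) (c : C) : (ofLin f : DualAlg K C) c = f c := rfl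
@[simp] lemma add_apply (f g : DualAlg K C) (c : C) : (f + g) c = f c + g c := rfl
@[simp] lemma zero_apply (c : C) : (0 : DualAlg K C) c = 0 := rfl
@[simp] lemma smul_apply (k : K) (f : DualAlg K C) (c : C) : (k • f) c = k * f c := rfl

variable [Coalgebra K C]

/-- The convolution product on the dual of a coalgebra. -/
def conv (f g : DualAlg K C) : DualAlg K C :=
  ofLin (LinearMap.mul' K K ∘ₗ TensorProduct.map f.toLin g.toLin ∘ₗ Coalgebra.comul)

lemma conv_repr (f g : DualAlg K C) (c : C) {ι : Type*} (r : Coalgebra.Repr K c ι) :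
    conv f g c = ∑ i ∈ r.index, f (r.left i) * g (r.right i) := by
  show LinearMap.mul' K K (TensorProduct.map f.toLin g.toLin (Coalgebra.comul c)) = _
  rw [← r.eq]
  simp [map_sum]

instance : Ring (DualAlg K C) :=
  { (inferInstanceAs (AddCommGroup (DualAlg K C)) : AddCommGroup (DualAlg K C)) with
    mul := conv
    one := ofLin Coalgebra.counit
    mul_assoc := by
      intro f g h
      ext c
      show conv (conv f g) h c = conv f (conv g h) c
      classical
      set r := Coalgebra.Repr.arbitrary K c
      set a₁ : (i : C × C) → Coalgebra.Repr K (r.left i) (C × C) := fun i => Coalgebra.Repr.arbitrary K _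
      set a₂ : (i : C × C) → Coalgebra.Repr K (r.right i) (C × C) := fun i => Coalgebra.Repr.arbitrary K _
      have key := Coalgebra.sum_map_tmul_tmul_eq (f.toLin) (g.toLin) (h.toLin) c
        (repr := r) (a₁ := a₁) (a₂ := a₂)
      have := congrArg (fun z => (LinearMap.mul' K K ∘ₗ (LinearMap.mul' K K).lTensor K) z) key
      simp only [map_sum, LinearMap.coe_comp, Function.comp_apply, LinearMap.lTensor_tmul,
        LinearMap.mul'_apply] at this
      rw [conv_repr _ _ _ r, conv_repr _ _ _ r]
      calc ∑ i ∈ r.index, conv f g (r.left i) * h (r.right i)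
          = ∑ i ∈ r.index, ∑ j ∈ (a₁ i).index,
              f ((a₁ i).left j) * (g ((a₁ i).right j) * h (r.right i)) := by
            refine Finset.sum_congr rfl fun i _ => ?_
            rw [conv_repr _ _ _ (a₁ i), Finset.sum_mul]
            exact Finset.sum_congr rfl fun j _ => mul_assoc _ _ _
        _ = ∑ i ∈ r.index, ∑ j ∈ (a₂ i).index,
              f (r.left i) * (g ((a₂ i).left j) * h ((a₂ i).right j)) := this.symm
        _ = ∑ i ∈ r.index, f (r.left i) * conv g h (r.right i) := by
            refine Finset.sum_congr rfl fun i _ => ?_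
            rw [conv_repr _ _ _ (a₂ i), Finset.mul_sum]
    one_mul := by
      intro f
      ext c
      show conv (ofLin Coalgebra.counit) f c = f c
      classical
      set r := Coalgebra.Repr.arbitrary K c
      have key := Coalgebra.sum_counit_tmul_map_eq (f.toLin) c (repr := r)
      have := congrArg (fun z => LinearMap.mul' K K z) key
      simp only [map_sum, LinearMap.mul'_apply, one_mul] at this
      rw [conv_repr _ _ _ r]
      simpa using this
    mul_one := by
      intro f
      ext c
      show conv f (ofLin Coalgebra.counit) c = f c
      classical
      set r := Coalgebra.Repr.arbitrary K c
      have key := Coalgebra.sum_map_tmul_counit_eq (f.toLin) c (repr := r)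
      have := congrArg (fun z => LinearMap.mul' K K z) key
      simp only [map_sum, LinearMap.mul'_apply, mul_one] at this
      rw [conv_repr _ _ _ r]
      simpa using this
    left_distrib := by
      intro f g h
      ext c
      show conv f (g + h) c = conv f g c + conv f h c
      classical
      set r := Coalgebra.Repr.arbitrary K c
      rw [conv_repr _ _ _ r, conv_repr _ _ _ r, conv_repr _ _ _ r, ← Finset.sum_add_distrib]
      exact Finset.sum_congr rfl fun i _ => by rw [add_apply, mul_add]
    right_distrib := by
      intro f g h
      ext c
      show conv (f + g) h c = conv f h c + conv g h c
      classical
      set r := Coalgebra.Repr.arbitrary K c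
      rw [conv_repr _ _ _ r, conv_repr _ _ _ r, conv_repr _ _ _ r, ← Finset.sum_add_distrib]
      exact Finset.sum_congr rfl fun i _ => by rw [add_apply, add_mul]
    zero_mul := by
      intro f
      ext c
      show conv 0 f c = 0
      classical
      rw [conv_repr _ _ _ (Coalgebra.Repr.arbitrary K c)]
      simp
    mul_zero := by
      intro f
      ext c
      show conv f 0 c = 0
      classical
      rw [conv_repr _ _ _ (Coalgebra.Repr.arbitrary K c)]
      simp }

lemma mul_repr (f g : DualAlg K C) (c : C) {ι : Type*} (r : Coalgebra.Repr K c ι) :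
    (f * g) c = ∑ i ∈ r.index, f (r.left i) * g (r.right i) := conv_repr f g c r

@[simp] lemma one_apply (c : C) : (1 : DualAlg K C) c = Coalgebra.counit c := rfl

instance : Algebra K (DualAlg K C) :=
  Algebra.ofModule
    (fun k f g => by
      ext c
      classical
      rw [show (k • f) * g = conv (k • f) g from rfl, conv_repr _ _ _ (Coalgebra.Repr.arbitrary K c)]
      rw [show k • (f * g) = k • conv f g from rfl]
      rw [smul_apply, conv_repr _ _ _ (Coalgebra.Repr.arbitrary K c), Finset.mul_sum]
      exact Finset.sum_congr rfl fun i _ => by rw [smul_apply]; ring)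
    (fun k f g => by
      ext c
      classical
      rw [show f * (k • g) = conv f (k • g) from rfl, conv_repr _ _ _ (Coalgebra.Repr.arbitrary K c)]
      rw [show k • (f * g) = k • conv f g from rfl]
      rw [smul_apply, conv_repr _ _ _ (Coalgebra.Repr.arbitrary K c), Finset.mul_sum]
      exact Finset.sum_congr rfl fun i _ => by rw [smul_apply]; ring)

end DualAlg

section Actions

variable (K C : Type) [Field K] [AddCommGroup C] [Module K C] [Coalgebra K C]

/-- The right action of the dual algebra on `C`: `c · f = f(c₁) c₂`, coming from the
left comodule structure of `C` over itself. -/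
def ract (f : DualAlg K C) : C →ₗ[K] C :=
  (TensorProduct.lid K C).toLinearMap ∘ₗ (f.toLin.rTensor C) ∘ₗ Coalgebra.comul

/-- The left action of the dual algebra on `C`: `f · c = f(c₂) c₁`, coming from the
right comodule structure of `C` over itself. -/
def lact (f : DualAlg K C) : C →ₗ[K] C :=
  (TensorProduct.rid K C).toLinearMap ∘ₗ (f.toLin.lTensor C) ∘ₗ Coalgebra.comul

variable {K C}

lemma ract_repr (f : DualAlg K C) (c : C) {ι : Type*} (r : Coalgebra.Repr K c ι) :
    ract K C f c = ∑ i ∈ r.index, f (r.left i) • r.right i := by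
  show (TensorProduct.lid K C) (f.toLin.rTensor C (Coalgebra.comul c)) = _
  rw [← r.eq]
  simp [map_sum]

lemma lact_repr (f : DualAlg K C) (c : C) {ι : Type*} (r : Coalgebra.Repr K c ι) :
    lact K C f c = ∑ i ∈ r.index, f (r.right i) • r.left i := by
  show (TensorProduct.rid K C) (f.toLin.lTensor C (Coalgebra.comul c)) = _
  rw [← r.eq]
  simp [map_sum]

variable (K C)

/-- `C` is a right module over its dual algebra (equivalently, a left comodule over itself). -/
instance : Module (DualAlg K C)ᵐᵒᵖ C where
  smul a c := ract K C a.unop c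
  one_smul c := by
    show ract K C 1 c = c
    classical
    set r := Coalgebra.Repr.arbitrary K c
    have key := Coalgebra.sum_counit_tmul_eq r
    have := congrArg (fun z => (TensorProduct.lid K C) z) key
    simp only [map_sum, TensorProduct.lid_tmul] at this
    rw [ract_repr _ _ r]
    simpa using this
  mul_smul a b c := by
    show ract K C (b.unop * a.unop) c = ract K C a.unop (ract K C b.unop c)
    classical
    set g := b.unop
    set f := a.unop
    set r := Coalgebra.Repr.arbitrary K c
    set a₁ : (i : C × C) → Coalgebra.Repr K (r.left i) (C × C) := fun i => Coalgebra.Repr.arbitrary K _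
    set a₂ : (i : C × C) → Coalgebra.Repr K (r.right i) (C × C) := fun i => Coalgebra.Repr.arbitrary K _
    have key := Coalgebra.sum_tmul_tmul_eq r a₁ a₂
    have hmap := congrArg (fun z =>
      (TensorProduct.lid K C)
        ((LinearMap.rTensor C (LinearMap.mul' K K ∘ₗ TensorProduct.map g.toLin f.toLin))
          ((TensorProduct.assoc K C C C).symm z))) key
    simp only [map_sum, TensorProduct.assoc_symm_tmul, LinearMap.rTensor_tmul,
      LinearMap.coe_comp, Function.comp_apply, TensorProduct.map_tmul,
      LinearMap.mul'_apply, TensorProduct.lid_tmul] at hmap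
    rw [ract_repr _ _ r]
    calc ∑ i ∈ r.index, (g * f) (r.left i) • r.right i
        = ∑ i ∈ r.index, ∑ j ∈ (a₁ i).index,
            (g ((a₁ i).left j) * f ((a₁ i).right j)) • r.right i := by
          refine Finset.sum_congr rfl fun i _ => ?_
          rw [DualAlg.mul_repr _ _ _ (a₁ i), Finset.sum_smul]
      _ = ∑ i ∈ r.index, ∑ j ∈ (a₂ i).index,
            (g (r.left i) * f ((a₂ i).left j)) • (a₂ i).right j := hmap
      _ = ract K C f (ract K C g c) := by
          rw [ract_repr g _ r, map_sum]
          refine Finset.sum_congr rfl fun i _ => ?_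
          rw [map_smul, ract_repr f _ (a₂ i), Finset.smul_sum]
          exact Finset.sum_congr rfl fun j _ => by rw [smul_smul]
  smul_zero a := map_zero (ract K C a.unop)
  smul_add a x y := map_add (ract K C a.unop) x y
  add_smul a b c := by
    show ract K C (a.unop + b.unop) c = ract K C a.unop c + ract K C b.unop c
    classical
    set r := Coalgebra.Repr.arbitrary K c
    rw [ract_repr _ _ r, ract_repr _ _ r, ract_repr _ _ r, ← Finset.sum_add_distrib]
    exact Finset.sum_congr rfl fun i _ => by rw [DualAlg.add_apply, add_smul]
  zero_smul c := by
    show ract K C 0 c = 0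
    classical
    rw [ract_repr _ _ (Coalgebra.Repr.arbitrary K c)]
    simp

/-- `C` is a left module over its dual algebra (equivalently, a right comodule over itself). -/
instance : Module (DualAlg K C) C where
  smul f c := lact K C f c
  one_smul c := by
    show lact K C 1 c = c
    classical
    set r := Coalgebra.Repr.arbitrary K c
    have key := Coalgebra.sum_tmul_counit_eq r
    have := congrArg (fun z => (TensorProduct.rid K C) z) key
    simp only [map_sum, TensorProduct.rid_tmul] at this
    rw [lact_repr _ _ r]
    simpa using this
  mul_smul f g c := by
    show lact K C (f * g) c = lact K C f (lact K C g c)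
    classical
    set r := Coalgebra.Repr.arbitrary K c
    set a₁ : (i : C × C) → Coalgebra.Repr K (r.left i) (C × C) := fun i => Coalgebra.Repr.arbitrary K _
    set a₂ : (i : C × C) → Coalgebra.Repr K (r.right i) (C × C) := fun i => Coalgebra.Repr.arbitrary K _
    have key := Coalgebra.sum_tmul_tmul_eq r a₁ a₂
    have hmap := congrArg (fun z =>
      (TensorProduct.rid K C)
        ((LinearMap.lTensor C (LinearMap.mul' K K ∘ₗ TensorProduct.map f.toLin g.toLin)) z)) key
    simp only [map_sum, LinearMap.lTensor_tmul, LinearMap.coe_comp, Function.comp_apply,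
      TensorProduct.map_tmul, LinearMap.mul'_apply, TensorProduct.rid_tmul] at hmap
    rw [lact_repr _ _ r]
    calc ∑ i ∈ r.index, (f * g) (r.right i) • r.left i
        = ∑ i ∈ r.index, ∑ j ∈ (a₂ i).index,
            (f ((a₂ i).left j) * g ((a₂ i).right j)) • r.left i := by
          refine Finset.sum_congr rfl fun i _ => ?_
          rw [DualAlg.mul_repr _ _ _ (a₂ i), Finset.sum_smul]
      _ = ∑ i ∈ r.index, ∑ j ∈ (a₁ i).index,
            (f ((a₁ i).right j) * g (r.right i)) • (a₁ i).left j := hmap.symm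
      _ = lact K C f (lact K C g c) := by
          rw [lact_repr g _ r, map_sum]
          refine Finset.sum_congr rfl fun i _ => ?_
          rw [map_smul, lact_repr f _ (a₁ i), Finset.smul_sum]
          refine Finset.sum_congr rfl fun j _ => ?_
          rw [smul_smul, mul_comm]
  smul_zero f := map_zero (lact K C f)
  smul_add f x y := map_add (lact K C f) x y
  add_smul f g c := by
    show lact K C (f + g) c = lact K C f c + lact K C g c
    classical
    set r := Coalgebra.Repr.arbitrary K c
    rw [lact_repr _ _ r, lact_repr _ _ r, lact_repr _ _ r, ← Finset.sum_add_distrib]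
    exact Finset.sum_congr rfl fun i _ => by rw [DualAlg.add_apply, add_smul]
  zero_smul c := by
    show lact K C 0 c = 0
    classical
    rw [lact_repr _ _ (Coalgebra.Repr.arbitrary K c)]
    simp

lemma op_smul_def (f : DualAlg K C) (c : C) : (MulOpposite.op f) • c = ract K C f c := rfl
lemma smul_def' (f : DualAlg K C) (c : C) : f • c = lact K C f c := rfl

instance : IsScalarTower K (DualAlg K C)ᵐᵒᵖ (DualAlg K C) :=
  ⟨fun k a b => by
    show b * (k • a).unop = k • (b * a.unop)
    rw [MulOpposite.unop_smul, mul_smul_comm]⟩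

instance : IsScalarTower K (DualAlg K C)ᵐᵒᵖ C :=
  ⟨fun k a c => by
    show ract K C (k • a.unop) c = k • ract K C a.unop c
    classical
    set r := Coalgebra.Repr.arbitrary K c
    rw [ract_repr _ _ r, ract_repr _ _ r, Finset.smul_sum]
    exact Finset.sum_congr rfl fun i _ => by rw [DualAlg.smul_apply, mul_smul]⟩

instance : IsScalarTower K (DualAlg K C) C :=
  ⟨fun k f c => by
    show lact K C (k • f) c = k • lact K C f c
    classical
    set r := Coalgebra.Repr.arbitrary K c
    rw [lact_repr _ _ r, lact_repr _ _ r, Finset.smul_sum]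
    exact Finset.sum_congr rfl fun i _ => by rw [DualAlg.smul_apply, mul_smul]⟩

instance : SMulCommClass K (DualAlg K C)ᵐᵒᵖ C :=
  ⟨fun k a c => by
    show k • ract K C a.unop c = ract K C a.unop (k • c)
    rw [map_smul]⟩

instance : SMulCommClass K (DualAlg K C) C :=
  ⟨fun k f c => by
    show k • lact K C f c = lact K C f (k • c)
    rw [map_smul]⟩

instance : SMulCommClass (DualAlg K C)ᵐᵒᵖ (DualAlg K C) (DualAlg K C) :=
  ⟨fun a b c => by
    show (b * c) * a.unop = b * (c * a.unop)
    rw [mul_assoc]⟩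

end Actions

section QcF

variable (K C : Type) [Field K] [AddCommGroup C] [Module K C] [Coalgebra K C]

/-- A coalgebra is right quasi-co-Frobenius if there is a monomorphism of right `C*`-modules
from `C` into a direct sum of copies of `C*`. -/
def RightQcF : Prop :=
  ∃ (I : Type) (f : C →ₗ[(DualAlg K C)ᵐᵒᵖ] (I →₀ DualAlg K C)), Function.Injective f

/-- A coalgebra is left quasi-co-Frobenius if there is a monomorphism of left `C*`-modules
from `C` into a direct sum of copies of `C*`. -/
def LeftQcF : Prop :=
  ∃ (I : Type) (f : C →ₗ[DualAlg K C] (I →₀ DualAlg K C)), Function.Injective f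

/-- A coalgebra is quasi-co-Frobenius if it is both left and right quasi-co-Frobenius. -/
def IsQcF : Prop := LeftQcF K C ∧ RightQcF K C

/-- A coalgebra is right co-Frobenius if there is a monomorphism of right `C*`-modules
from `C` into `C*`. -/
def RightCoFrobenius : Prop :=
  ∃ f : C →ₗ[(DualAlg K C)ᵐᵒᵖ] DualAlg K C, Function.Injective f

/-- A coalgebra is left co-Frobenius if there is a monomorphism of left `C*`-modules
from `C` into `C*`. -/
def LeftCoFrobenius : Prop :=
  ∃ f : C →ₗ[DualAlg K C] DualAlg K C, Function.Injective f

/-- A coalgebra is co-Frobenius if it is both left and right co-Frobenius. -/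
def IsCoFrobenius : Prop := LeftCoFrobenius K C ∧ RightCoFrobenius K C

/-- The finite topology on the dual of a coalgebra: the topology induced from the product
topology on `C → K`, where `K` carries the discrete topology.  A basis of neighbourhoods of `0`
is given by the annihilators `F^⊥` of finite-dimensional subspaces `F ⊆ C`. -/
def finiteTopology : TopologicalSpace (DualAlg K C) :=
  TopologicalSpace.induced (fun f => (f : C → K))
    (@Pi.topologicalSpace C (fun _ => K) (fun _ => ⊥))

end QcF

section Rational

variable (K C : Type) [Field K] [AddCommGroup C] [Module K C] [Coalgebra K C]
variable (M : Type) [AddCommGroup M] [Module K M]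

/-- The contraction `M ⊗ C → M` along a functional `f ∈ C*`: `m ⊗ c ↦ f(c) m`. -/
def cntr (f : DualAlg K C) : M ⊗[K] C →ₗ[K] M :=
  (TensorProduct.rid K M).toLinearMap ∘ₗ (f.toLin.lTensor M)

@[simp] lemma cntr_tmul (f : DualAlg K C) (m : M) (c : C) :
    cntr K C M f (m ⊗ₜ[K] c) = f c • m := by
  simp [cntr]

/-- An element `m` of a right `C*`-module is rational if the action of `C*` on it comes from
a "coaction" `ρ(m) = ∑ xᵢ ⊗ cᵢ ∈ M ⊗ C`, i.e. `m · f = ∑ f(cᵢ) xᵢ` for all `f ∈ C*`. -/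
def IsRatRight [Module (DualAlg K C)ᵐᵒᵖ M] (m : M) : Prop :=
  ∃ z : M ⊗[K] C, ∀ f : DualAlg K C, (MulOpposite.op f) • m = cntr K C M f z

/-- An element `m` of a left `C*`-module is rational if the action of `C*` on it comes from
a "coaction" `ρ(m) = ∑ xᵢ ⊗ cᵢ ∈ M ⊗ C`, i.e. `f · m = ∑ f(cᵢ) xᵢ` for all `f ∈ C*`. -/
def IsRatLeft [Module (DualAlg K C) M] (m : M) : Prop :=
  ∃ z : M ⊗[K] C, ∀ f : DualAlg K C, f • m = cntr K C M f z

lemma cntr_mul_ract (g f : DualAlg K C) :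
    cntr K C M (g * f) = (cntr K C M f) ∘ₗ (TensorProduct.map LinearMap.id (ract K C g)) := by
  apply TensorProduct.ext'
  intro m c
  classical
  set r := Coalgebra.Repr.arbitrary K c
  simp only [LinearMap.coe_comp, Function.comp_apply, TensorProduct.map_tmul,
    LinearMap.id_coe, id_eq, cntr_tmul]
  congr 1
  rw [DualAlg.mul_repr _ _ _ r, ract_repr _ _ r]
  show _ = f.toLin _
  rw [map_sum]
  exact Finset.sum_congr rfl fun i _ => by
    rw [map_smul, smul_eq_mul, DualAlg.toLin_apply]

lemma cntr_mul_lact (f g : DualAlg K C) :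
    cntr K C M (f * g) = (cntr K C M f) ∘ₗ (TensorProduct.map LinearMap.id (lact K C g)) := by
  apply TensorProduct.ext'
  intro m c
  classical
  set r := Coalgebra.Repr.arbitrary K c
  simp only [LinearMap.coe_comp, Function.comp_apply, TensorProduct.map_tmul,
    LinearMap.id_coe, id_eq, cntr_tmul]
  congr 1
  rw [DualAlg.mul_repr _ _ _ r, lact_repr _ _ r]
  show _ = f.toLin _
  rw [map_sum]
  refine Finset.sum_congr rfl fun i _ => ?_
  rw [map_smul, smul_eq_mul, DualAlg.toLin_apply, mul_comm]

/-- `Rat(M)`, the largest rational submodule of a right `C*`-module `M`. -/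
def RatR [Module (DualAlg K C)ᵐᵒᵖ M] : Submodule (DualAlg K C)ᵐᵒᵖ M where
  carrier := {m | IsRatRight K C M m}
  zero_mem' := ⟨0, fun f => by simp⟩
  add_mem' := by
    rintro x y ⟨z, hz⟩ ⟨w, hw⟩
    exact ⟨z + w, fun f => by rw [smul_add, hz f, hw f, map_add]⟩
  smul_mem' := by
    rintro a m ⟨z, hz⟩
    refine ⟨(TensorProduct.map LinearMap.id (ract K C a.unop)) z, fun f => ?_⟩
    have h1 : (MulOpposite.op f) • a • m = (MulOpposite.op (a.unop * f)) • m := by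
      rw [MulOpposite.op_mul, mul_smul, MulOpposite.op_unop]
    rw [h1, hz (a.unop * f), cntr_mul_ract]
    rfl

/-- `Rat(M)`, the largest rational submodule of a left `C*`-module `M`. -/
def RatL [Module (DualAlg K C) M] : Submodule (DualAlg K C) M where
  carrier := {m | IsRatLeft K C M m}
  zero_mem' := ⟨0, fun f => by simp⟩
  add_mem' := by
    rintro x y ⟨z, hz⟩ ⟨w, hw⟩
    exact ⟨z + w, fun f => by rw [smul_add, hz f, hw f, map_add]⟩
  smul_mem' := by
    rintro g m ⟨z, hz⟩
    refine ⟨(TensorProduct.map LinearMap.id (lact K C g)) z, fun f => ?_⟩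
    rw [← mul_smul, hz (f * g), cntr_mul_lact]
    rfl

end Rational

section Comodules

variable (K C : Type) [Field K] [AddCommGroup C] [Module K C] [Coalgebra K C]

/-- A left `C`-comodule, viewed as a `K`-vector space together with a compatible rational
right `C*`-module structure. -/
structure LComod where
  M : Type
  [ab : AddCommGroup M]
  [modK : Module K M]
  [modD : Module (DualAlg K C)ᵐᵒᵖ M]
  compat : ∀ (k : K) (m : M), k • m = (MulOpposite.op (algebraMap K (DualAlg K C) k)) • m
  rat : ∀ m : M, IsRatRight K C M m

attribute [instance] LComod.ab LComod.modK LComod.modD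

/-- A right `C`-comodule, viewed as a `K`-vector space together with a compatible rational
left `C*`-module structure. -/
structure RComod where
  M : Type
  [ab : AddCommGroup M]
  [modK : Module K M]
  [modD : Module (DualAlg K C) M]
  compat : ∀ (k : K) (m : M), k • m = (algebraMap K (DualAlg K C) k) • m
  rat : ∀ m : M, IsRatLeft K C M m

attribute [instance] RComod.ab RComod.modK RComod.modD

variable {K C}

/-- A left comodule is simple if it is simple as a (rational) right `C*`-module. -/
def LComod.Simple (X : LComod K C) : Prop := IsSimpleModule (DualAlg K C)ᵐᵒᵖ X.M

/-- A right comodule is simple if it is simple as a (rational) left `C*`-module. -/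
def RComod.Simple (X : RComod K C) : Prop := IsSimpleModule (DualAlg K C) X.M

/-- A left comodule is an injective object if every comodule map into it extends along
monomorphisms of left comodules. -/
def LComod.InjectiveObj (E : LComod K C) : Prop :=
  ∀ (X Y : LComod K C) (i : X.M →ₗ[(DualAlg K C)ᵐᵒᵖ] Y.M), Function.Injective i →
    ∀ f : X.M →ₗ[(DualAlg K C)ᵐᵒᵖ] E.M, ∃ g : Y.M →ₗ[(DualAlg K C)ᵐᵒᵖ] E.M, g ∘ₗ i = f

/-- A right comodule is an injective object if every comodule map into it extends along
monomorphisms of right comodules. -/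
def RComod.InjectiveObj (E : RComod K C) : Prop :=
  ∀ (X Y : RComod K C) (i : X.M →ₗ[DualAlg K C] Y.M), Function.Injective i →
    ∀ f : X.M →ₗ[DualAlg K C] E.M, ∃ g : Y.M →ₗ[DualAlg K C] E.M, g ∘ₗ i = f

/-- `E` is an injective envelope of the left comodule `S`: `E` is injective and `S` embeds
in `E` as an essential subcomodule. -/
def LComod.IsInjEnvelopeOf (E S : LComod K C) : Prop :=
  E.InjectiveObj ∧ ∃ i : S.M →ₗ[(DualAlg K C)ᵐᵒᵖ] E.M, Function.Injective i ∧
    ∀ N : Submodule (DualAlg K C)ᵐᵒᵖ E.M, N ⊓ LinearMap.range i = ⊥ → N = ⊥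

/-- `E` is an injective envelope of the right comodule `S`: `E` is injective and `S` embeds
in `E` as an essential subcomodule. -/
def RComod.IsInjEnvelopeOf (E S : RComod K C) : Prop :=
  E.InjectiveObj ∧ ∃ i : S.M →ₗ[DualAlg K C] E.M, Function.Injective i ∧
    ∀ N : Submodule (DualAlg K C) E.M, N ⊓ LinearMap.range i = ⊥ → N = ⊥

variable (K C)

/-- A coalgebra is right semiperfect if the injective envelope of every simple left comodule
is finite dimensional. -/
def RightSemiperfect : Prop :=
  ∀ S E : LComod K C, S.Simple → E.IsInjEnvelopeOf S → FiniteDimensional K E.M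

/-- A coalgebra is left semiperfect if the injective envelope of every simple right comodule
is finite dimensional. -/
def LeftSemiperfect : Prop :=
  ∀ S E : RComod K C, S.Simple → E.IsInjEnvelopeOf S → FiniteDimensional K E.M

variable {K C}

instance (X : LComod K C) : SMulCommClass K (DualAlg K C)ᵐᵒᵖ X.M :=
  ⟨fun k a m => by
    rw [X.compat k m, X.compat k (a • m), ← mul_smul, ← mul_smul, ← MulOpposite.op_unop a,
      ← MulOpposite.op_mul, ← MulOpposite.op_mul, Algebra.commutes k (MulOpposite.unop a)]⟩

instance (X : RComod K C) : SMulCommClass K (DualAlg K C) X.M :=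
  ⟨fun k a m => by
    rw [X.compat k m, X.compat k (a • m), ← mul_smul, ← mul_smul, Algebra.commutes k a]⟩

end Comodules

section DualModules

variable {K C : Type} [Field K] [AddCommGroup C] [Module K C] [Coalgebra K C]
variable (M : Type) [AddCommGroup M] [Module K M]

/-- The action of an element of (the opposite of) the dual algebra as a `K`-linear map. -/
def opSmulLin [Module (DualAlg K C)ᵐᵒᵖ M] [SMulCommClass K (DualAlg K C)ᵐᵒᵖ M]
    (a : (DualAlg K C)ᵐᵒᵖ) : M →ₗ[K] M where
  toFun m := a • m
  map_add' := smul_add a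
  map_smul' k m := (smul_comm k a m).symm

/-- The action of an element of the dual algebra as a `K`-linear map. -/
def smulLin [Module (DualAlg K C) M] [SMulCommClass K (DualAlg K C) M]
    (a : DualAlg K C) : M →ₗ[K] M where
  toFun m := a • m
  map_add' := smul_add a
  map_smul' k m := (smul_comm k a m).symm

/-- The `K`-linear dual of a right `C*`-module is a left `C*`-module via `(g·φ)(m) = φ(m·g)`. -/
instance dualModuleLeft [Module (DualAlg K C)ᵐᵒᵖ M] [SMulCommClass K (DualAlg K C)ᵐᵒᵖ M] :
    Module (DualAlg K C) (Module.Dual K M) where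
  smul g φ := φ ∘ₗ opSmulLin M (MulOpposite.op g)
  one_smul φ := by ext m; show φ ((MulOpposite.op (1 : DualAlg K C)) • m) = φ m; simp
  mul_smul g h φ := by
    ext m
    show φ ((MulOpposite.op (g * h)) • m) = φ ((MulOpposite.op h) • (MulOpposite.op g) • m)
    rw [← mul_smul, MulOpposite.op_mul]
  smul_zero g := by ext m; rfl
  smul_add g φ ψ := by ext m; rfl
  add_smul g h φ := by
    ext m
    show φ ((MulOpposite.op (g + h)) • m) = φ (MulOpposite.op g • m) + φ (MulOpposite.op h • m)
    rw [show MulOpposite.op (g + h) = MulOpposite.op g + MulOpposite.op h from rfl, add_smul,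
      map_add]
  zero_smul φ := by
    ext m
    show φ ((MulOpposite.op (0 : DualAlg K C)) • m) = 0
    rw [show MulOpposite.op (0 : DualAlg K C) = 0 from rfl, zero_smul, map_zero]

/-- The `K`-linear dual of a left `C*`-module is a right `C*`-module via `(φ·f)(m) = φ(f·m)`. -/
instance dualModuleRight [Module (DualAlg K C) M] [SMulCommClass K (DualAlg K C) M] :
    Module (DualAlg K C)ᵐᵒᵖ (Module.Dual K M) where
  smul a φ := φ ∘ₗ smulLin M a.unop
  one_smul φ := by ext m; show φ ((1 : DualAlg K C) • m) = φ m; simp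
  mul_smul a b φ := by
    ext m
    show φ ((b.unop * a.unop) • m) = φ (b.unop • a.unop • m)
    rw [← mul_smul]
  smul_zero g := by ext m; rfl
  smul_add g φ ψ := by ext m; rfl
  add_smul a b φ := by
    ext m
    show φ ((a.unop + b.unop) • m) = φ (a.unop • m) + φ (b.unop • m)
    rw [add_smul, map_add]
  zero_smul φ := by
    ext m
    show φ ((0 : DualAlg K C) • m) = 0
    rw [zero_smul, map_zero]

end DualModules

section Hopf

variable (K H : Type) [Field K] [Ring H] [HopfAlgebra K H]

/-- The space of left integrals of a Hopf algebra: those `t ∈ H*` with `α * t = α(1) t`. -/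
def leftIntegrals : Submodule K (DualAlg K H) where
  carrier := {t | ∀ a : DualAlg K H, a * t = a (1 : H) • t}
  zero_mem' := by intro a; simp
  add_mem' := by intro x y hx hy a; rw [mul_add, hx a, hy a, smul_add]
  smul_mem' := by intro k x hx a; rw [mul_smul_comm, hx a, smul_comm]

/-- The space of right integrals of a Hopf algebra: those `t ∈ H*` with `t * α = α(1) t`. -/
def rightIntegrals : Submodule K (DualAlg K H) where
  carrier := {t | ∀ a : DualAlg K H, t * a = a (1 : H) • t}
  zero_mem' := by intro a; simp
  add_mem' := by intro x y hx hy a; rw [add_mul, hx a, hy a, smul_add]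
  smul_mem' := by intro k x hx a; rw [smul_mul_assoc, hx a, smul_comm]

/-- `x ↦ x ⇀ t`, i.e. `(x ⇀ t)(y) = t(yx)`, as a linear map `H → H*`. -/
def intMap (t : DualAlg K H) : H →ₗ[K] DualAlg K H where
  toFun x := DualAlg.ofLin (t.toLin ∘ₗ LinearMap.mulRight K x)
  map_add' x y := by
    apply DualAlg.ext; intro z
    show t.toLin (z * (x + y)) = t.toLin (z * x) + t.toLin (z * y)
    rw [mul_add, map_add]
  map_smul' k x := by
    apply DualAlg.ext; intro z
    show t.toLin (z * (k • x)) = k * t.toLin (z * x)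
    rw [mul_smul_comm, map_smul, smul_eq_mul]

/-- The twisted left coaction `x ↦ a S(x₂) ⊗ x₁` on `H`, for `a ∈ H`. -/
def aCoaction (a : H) : H →ₗ[K] H ⊗[K] H :=
  (TensorProduct.map ((LinearMap.mulLeft K a) ∘ₗ (HopfAlgebra.antipode (R := K))) LinearMap.id)
    ∘ₗ (TensorProduct.comm K H H).toLinearMap ∘ₗ Coalgebra.comul

/-- The right `H*`-action on `ᵃH` associated to the twisted coaction `x ↦ a S(x₂) ⊗ x₁`:
`x · f = f(a S(x₂)) x₁`. -/
def aAction (a : H) (f : DualAlg K H) : H →ₗ[K] H :=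
  (TensorProduct.lid K H).toLinearMap ∘ₗ (f.toLin.rTensor H) ∘ₗ aCoaction K H a

end Hopf

section AntipodeBijective

variable {K H : Type} [Field K] [Ring H] [HopfAlgebra K H]

local notation "Sa" => (HopfAlgebra.antipode (R := K) (A := H))

/-- `Gm t (u ⊗ v) = t v • u`. -/
def Gm (t : H →ₗ[K] K) : H ⊗[K] H →ₗ[K] H :=
  (TensorProduct.rid K H).toLinearMap ∘ₗ (LinearMap.lTensor H t)

@[simp] lemma Gm_tmul (t : H →ₗ[K] K) (u v : H) : Gm t (u ⊗ₜ[K] v) = t v • u := by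
  simp [Gm]

/-- the left-integral property: `f * t = f 1 • t` in the convolution algebra. -/
def IsLI (t : H →ₗ[K] K) : Prop :=
  ∀ f : H →ₗ[K] K, LinearMap.mul' K K ∘ₗ (TensorProduct.map f t) ∘ₗ comul = f 1 • t

lemma counit_left_collapse {z : H} {ι : Type*} (r : Coalgebra.Repr K z ι) :
    ∑ i ∈ r.index, counit (R := K) (r.left i) • r.right i = z := by
  have h := Coalgebra.sum_counit_tmul_eq r
  have h2 := congrArg (TensorProduct.lid K H) h
  rw [map_sum] at h2
  simp only [TensorProduct.lid_tmul] at h2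
  simpa using h2

lemma counit_right_collapse {z : H} {ι : Type*} (r : Coalgebra.Repr K z ι) :
    ∑ i ∈ r.index, counit (R := K) (r.right i) • r.left i = z := by
  have h := Coalgebra.sum_tmul_counit_eq r
  have h2 := congrArg (TensorProduct.rid K H) h
  rw [map_sum] at h2
  simp only [TensorProduct.rid_tmul] at h2
  simpa using h2

variable {t : H →ₗ[K] K}

lemma E1 (hI : IsLI t) (z : H) : Gm t (comul z) = t z • (1 : H) := by
  rw [← sub_eq_zero, ← Module.forall_dual_apply_eq_zero_iff K]
  intro φ
  rw [map_sub, sub_eq_zero]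
  have r := Coalgebra.Repr.arbitrary K z
  have h1 : Gm t (comul z) = ∑ i ∈ r.index, t (r.right i) • r.left i := by
    rw [← r.eq]; simp [Gm, map_sum]
  have h2 := LinearMap.congr_fun (hI φ) z
  simp only [LinearMap.coe_comp, Function.comp_apply, LinearMap.smul_apply, smul_eq_mul] at h2
  rw [← r.eq] at h2
  simp only [map_sum, TensorProduct.map_tmul, LinearMap.mul'_apply] at h2
  rw [h1, map_sum, map_smul]
  simp only [map_smul, smul_eq_mul]
  rw [show ∑ i ∈ r.index, t (r.right i) * φ (r.left i)
      = ∑ i ∈ r.index, φ (r.left i) * t (r.right i) from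
    Finset.sum_congr rfl fun i _ => mul_comm _ _, h2]
  ring

/-- multiplying a comul by a pure tensor on the right, under `Gm`. -/
lemma Gm_mul_right {a : H} {ι : Type*} (ra : Coalgebra.Repr K a ι) (p q : H) :
    Gm t ((p ⊗ₜ[K] q) * comul a) =
      ∑ i ∈ ra.index, t (q * ra.right i) • (p * ra.left i) := by
  rw [← ra.eq, Finset.mul_sum]
  simp only [Algebra.TensorProduct.tmul_mul_tmul, map_sum, Gm_tmul]

/-- multiplying a comul by a pure tensor on the left, under `Gm`. -/
lemma Gm_mul_left {y : H} {ι : Type*} (ry : Coalgebra.Repr K y ι) (p q : H) :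
    Gm t (comul y * (p ⊗ₜ[K] q)) =
      ∑ k ∈ ry.index, t (ry.right k * q) • (ry.left k * p) := by
  rw [← ry.eq, Finset.sum_mul]
  simp only [Algebra.TensorProduct.tmul_mul_tmul, map_sum, Gm_tmul]


/-- The fundamental identity (★):
`∑ t(h₂ a) • S(h₁) = ∑ t(h a₂) • a₁` for a left integral `t`. -/
lemma star_id (hI : IsLI t) (h a : H) {ι κ : Type*} (rh : Coalgebra.Repr K h ι) (ra : Coalgebra.Repr K a κ) :
    ∑ k ∈ rh.index, t (rh.right k * a) • Sa (rh.left k)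
      = ∑ i ∈ ra.index, t (h * ra.right i) • ra.left i := by
  classical
  set b₁ : (k : rh.ι) → Coalgebra.Repr K (rh.left k) (H × H) := fun k => Coalgebra.Repr.arbitrary K _
    with hb₁
  set b₂ : (k : rh.ι) → Coalgebra.Repr K (rh.right k) (H × H) := fun k => Coalgebra.Repr.arbitrary K _
    with hb₂
  set V : H ⊗[K] (H ⊗[K] H) →ₗ[K] H :=
    (LinearMap.mul' K H) ∘ₗ
      (TensorProduct.map Sa ((Gm t) ∘ₗ (LinearMap.mulRight K (comul (R := K) a)))) with hVdef
  have hV : ∀ (u v w : H), V (u ⊗ₜ[K] (v ⊗ₜ[K] w)) = Sa u * Gm t ((v ⊗ₜ[K] w) * comul a) := by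
    intro u v w
    simp [hVdef]
  have key := congrArg V (Coalgebra.sum_tmul_tmul_eq rh b₁ b₂)
  rw [map_sum, map_sum] at key
  simp only [map_sum, hV] at key
  -- LHS of key (b₁-form) equals RHS of goal; RHS of key (b₂-form) equals LHS of goal
  have hB : ∑ k ∈ rh.index, ∑ j ∈ (b₂ k).index,
      Sa (rh.left k) * Gm t (((b₂ k).left j ⊗ₜ[K] (b₂ k).right j) * comul a)
      = ∑ k ∈ rh.index, t (rh.right k * a) • Sa (rh.left k) := by
    refine Finset.sum_congr rfl fun k _ => ?_
    rw [← Finset.mul_sum, ← map_sum, ← Finset.sum_mul]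
    have : (∑ j ∈ (b₂ k).index, (b₂ k).left j ⊗ₜ[K] (b₂ k).right j) * comul (R := K) a
        = comul (R := K) (rh.right k * a) := by
      rw [(b₂ k).eq, Bialgebra.comul_mul]
    rw [this, E1 hI, mul_smul_comm, mul_one]
  have hA : ∑ k ∈ rh.index, ∑ j ∈ (b₁ k).index,
      Sa ((b₁ k).left j) * Gm t (((b₁ k).right j ⊗ₜ[K] rh.right k) * comul a)
      = ∑ i ∈ ra.index, t (h * ra.right i) • ra.left i := by
    have step1 : ∀ k ∈ rh.index, ∑ j ∈ (b₁ k).index,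
        Sa ((b₁ k).left j) * Gm t (((b₁ k).right j ⊗ₜ[K] rh.right k) * comul a)
        = ∑ i ∈ ra.index, (counit (R := K) (rh.left k) * t (rh.right k * ra.right i))
            • ra.left i := by
      intro k _
      calc ∑ j ∈ (b₁ k).index,
            Sa ((b₁ k).left j) * Gm t (((b₁ k).right j ⊗ₜ[K] rh.right k) * comul a)
          = ∑ j ∈ (b₁ k).index, ∑ i ∈ ra.index,
              t (rh.right k * ra.right i) • (Sa ((b₁ k).left j) * ((b₁ k).right j * ra.left i)) := by
            refine Finset.sum_congr rfl fun j _ => ?_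
            rw [Gm_mul_right ra, Finset.mul_sum]
            exact Finset.sum_congr rfl fun i _ => (mul_smul_comm _ _ _)
        _ = ∑ i ∈ ra.index, ∑ j ∈ (b₁ k).index,
              t (rh.right k * ra.right i) • ((Sa ((b₁ k).left j) * (b₁ k).right j) * ra.left i) := by
            rw [Finset.sum_comm]
            exact Finset.sum_congr rfl fun i _ => Finset.sum_congr rfl fun j _ => by
              rw [mul_assoc]
        _ = ∑ i ∈ ra.index, (counit (R := K) (rh.left k) * t (rh.right k * ra.right i))
              • ra.left i := by
            refine Finset.sum_congr rfl fun i _ => ?_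
            rw [← Finset.smul_sum, ← Finset.sum_mul,
              HopfAlgebra.sum_antipode_mul_eq_smul (R := K) (b₁ k),
              smul_mul_assoc, one_mul, smul_smul, mul_comm]
    rw [Finset.sum_congr rfl step1, Finset.sum_comm]
    refine Finset.sum_congr rfl fun i _ => ?_
    have : ∑ k ∈ rh.index, (counit (R := K) (rh.left k) * t (rh.right k * ra.right i)) • ra.left i
        = (∑ k ∈ rh.index, counit (R := K) (rh.left k) * t (rh.right k * ra.right i)) • ra.left i := by
      rw [Finset.sum_smul]
    rw [this]
    congr 1
    have : ∑ k ∈ rh.index, counit (R := K) (rh.left k) * t (rh.right k * ra.right i)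
        = t ((∑ k ∈ rh.index, counit (R := K) (rh.left k) • rh.right k) * ra.right i) := by
      rw [Finset.sum_mul, map_sum]
      exact Finset.sum_congr rfl fun k _ => by rw [smul_mul_assoc, map_smul, smul_eq_mul]
    rw [this, counit_left_collapse rh]
  rw [hA, hB] at key
  exact key.symm


/-- decompose a 2-tensor with basis vectors on the left -/
lemma decompL {ι : Type} (B : Module.Basis ι K H) (z : H ⊗[K] H) :
    ∃ (s : Finset ι) (c : ι → H), z = ∑ j ∈ s, B j ⊗ₜ[K] c j := by
  classical
  set e : H ⊗[K] H ≃ₗ[K] (ι →₀ H) :=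
    (TensorProduct.congr B.repr (LinearEquiv.refl K H)).trans
      (TensorProduct.finsuppScalarLeft K H ι) with he
  refine ⟨(e z).support, fun j => e z j, ?_⟩
  apply e.injective
  rw [map_sum]
  have hsingle : ∀ (j : ι) (m : H), e (B j ⊗ₜ[K] m) = Finsupp.single j m := by
    intro j m
    rw [he]
    simp only [LinearEquiv.trans_apply, TensorProduct.congr_tmul, LinearEquiv.refl_apply,
      Module.Basis.repr_self]
    ext i
    rw [TensorProduct.finsuppScalarLeft_apply_tmul_apply]
    by_cases hij : i = j
    · subst hij; simp
    · simp [Finsupp.single_eq_of_ne (Ne.symm hij), Finsupp.single_eq_of_ne hij]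
  rw [Finset.sum_congr rfl fun j _ => hsingle j (e z j)]
  simpa [Finsupp.sum] using (Finsupp.sum_single (e z)).symm

/-- decompose a 2-tensor with basis vectors on the right -/
lemma decompR {ι : Type} (B : Module.Basis ι K H) (z : H ⊗[K] H) :
    ∃ (s : Finset ι) (c : ι → H), z = ∑ j ∈ s, c j ⊗ₜ[K] B j := by
  classical
  set e : H ⊗[K] H ≃ₗ[K] (ι →₀ H) :=
    (TensorProduct.congr (LinearEquiv.refl K H) B.repr).trans
      (TensorProduct.finsuppScalarRight K K H ι) with he
  refine ⟨(e z).support, fun j => e z j, ?_⟩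
  apply e.injective
  rw [map_sum]
  have hsingle : ∀ (j : ι) (m : H), e (m ⊗ₜ[K] B j) = Finsupp.single j m := by
    intro j m
    rw [he]
    simp only [LinearEquiv.trans_apply, TensorProduct.congr_tmul, LinearEquiv.refl_apply,
      Module.Basis.repr_self]
    ext i
    rw [TensorProduct.finsuppScalarRight_apply_tmul_apply]
    by_cases hij : i = j
    · subst hij; simp
    · simp [Finsupp.single_eq_of_ne (Ne.symm hij), Finsupp.single_eq_of_ne hij]
  rw [Finset.sum_congr rfl fun j _ => hsingle j (e z j)]
  simpa [Finsupp.sum] using (Finsupp.sum_single (e z)).symm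


/-- membership in the "left kernel" of the pairing `(y,x) ↦ t (y x)`. -/
def JP (t : H →ₗ[K] K) (x : H) : Prop := ∀ y : H, t (y * x) = 0

lemma I1 (hI : IsLI t) {x : H} (hx : JP t x) (h : H) {ι : Type*} (rx : Coalgebra.Repr K x ι) :
    ∑ i ∈ rx.index, t (h * rx.right i) • rx.left i = 0 := by
  rw [← star_id hI h x (Coalgebra.Repr.arbitrary K h) rx]
  exact Finset.sum_eq_zero fun k _ => by rw [hx _, zero_smul]

lemma t_ne_zero_exists (ht : t ≠ 0) : ∃ y : H, t y ≠ 0 := by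
  by_contra hcon
  push_neg at hcon
  exact ht (LinearMap.ext fun y => by simp [hcon y])

lemma JP_decomp (hI : IsLI t) {ι : Type} (B : Module.Basis ι K H) {x : H} (hx : JP t x) :
    ∃ (s : Finset ι) (c : ι → H),
      (∑ j ∈ s, (B j) ⊗ₜ[K] (c j) = comul (R := K) x) ∧ ∀ j ∈ s, JP t (c j) := by
  obtain ⟨s, c, hz⟩ := decompL B (comul (R := K) x)
  refine ⟨s, c, hz.symm, fun j hj y => ?_⟩
  let r : Coalgebra.Repr K x ι := ⟨s, fun j => B j, c, hz.symm⟩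
  have h0 := I1 hI hx y r
  exact linearIndependent_iff'.mp B.linearIndependent s (fun j => t (y * c j)) h0 j hj

lemma epsJ (hI : IsLI t) (ht : t ≠ 0) {v : H} (hv : JP t v) : counit (R := K) v = 0 := by
  obtain ⟨s, c, hz, hc⟩ := JP_decomp hI (Module.Basis.ofVectorSpace K H) hv
  let r : Coalgebra.Repr K v _ := ⟨s, fun j => Module.Basis.ofVectorSpace K H j, c, hz⟩
  have hanti := HopfAlgebra.sum_antipode_mul_eq_smul (R := K) r
  obtain ⟨y, hy⟩ := t_ne_zero_exists ht
  have h1 : t (y * (counit (R := K) v • (1 : H))) = counit (R := K) v * t y := by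
    rw [mul_smul_comm, mul_one, map_smul, smul_eq_mul]
  have h2 : t (y * (counit (R := K) v • (1 : H))) = 0 := by
    rw [← hanti, Finset.mul_sum, map_sum]
    exact Finset.sum_eq_zero fun j hj => by rw [← mul_assoc]; exact hc j hj _
  rw [h2] at h1
  exact (mul_eq_zero.mp h1.symm).resolve_right hy

lemma Jzero (hI : IsLI t) (ht : t ≠ 0) {x : H} (hx : JP t x) : x = 0 := by
  obtain ⟨s, c, hz, hc⟩ := JP_decomp hI (Module.Basis.ofVectorSpace K H) hx
  let r : Coalgebra.Repr K x _ := ⟨s, fun j => Module.Basis.ofVectorSpace K H j, c, hz⟩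
  have := counit_right_collapse r
  rw [← this]
  exact Finset.sum_eq_zero fun j hj => by
    rw [show r.right j = c j from rfl, epsJ hI ht (hc j hj), zero_smul]


lemma antipode_surj (hI : IsLI t) (ht : t ≠ 0) (a : H) :
    ∃ w : H, Sa w = a := by
  classical
  have r := Coalgebra.Repr.arbitrary K a
  set Wset : Set H := r.right '' ↑r.index with hWset
  have hWfin : Wset.Finite := (r.index.finite_toSet).image _
  set W : Submodule K H := Submodule.span K Wset with hW
  haveI : FiniteDimensional K W := FiniteDimensional.span_of_finite K hWfin
  set Φ : H →ₗ[K] Module.Dual K W :=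
    { toFun := fun h => t ∘ₗ (LinearMap.mulLeft K h) ∘ₗ W.subtype
      map_add' := by
        intro h h'
        ext w
        simp [add_mul]
      map_smul' := by
        intro k h
        ext w
        simp [smul_mul_assoc] } with hΦ
  have hΦapp : ∀ (h : H) (w : W), Φ h w = t (h * (w : H)) := fun h w => rfl
  set U : Submodule K (Module.Dual K W) := LinearMap.range Φ with hU
  have hco : U.dualCoannihilator = ⊥ := by
    rw [Submodule.eq_bot_iff]
    intro w hw
    rw [Submodule.mem_dualCoannihilator] at hw
    have hJP : JP t (w : H) := fun y => hw (Φ y) ⟨y, rfl⟩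
    exact Subtype.ext (Jzero hI ht hJP)
  have hfr := Subspace.finrank_add_finrank_dualCoannihilator_eq U
  rw [hco, finrank_bot, add_zero] at hfr
  have hUtop : U = ⊤ := Submodule.eq_top_of_finrank_eq
    (by rw [hfr, Subspace.dual_finrank_eq])
  have hmem : (counit (R := K) (A := H)) ∘ₗ W.subtype ∈ U := hUtop ▸ Submodule.mem_top
  obtain ⟨h, hh⟩ := hmem
  have hcoef : ∀ i ∈ r.index, t (h * r.right i) = counit (R := K) (r.right i) := by
    intro i hi
    have hmemW : r.right i ∈ W := Submodule.subset_span ⟨i, hi, rfl⟩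
    have := congrFun (congrArg DFunLike.coe hh) ⟨r.right i, hmemW⟩
    exact this
  refine ⟨∑ k ∈ (Coalgebra.Repr.arbitrary K h).index,
      t ((Coalgebra.Repr.arbitrary K h).right k * a) • (Coalgebra.Repr.arbitrary K h).left k, ?_⟩
  rw [map_sum]
  simp only [map_smul]
  rw [star_id hI h a (Coalgebra.Repr.arbitrary K h) r]
  rw [Finset.sum_congr rfl fun i hi => by rw [hcoef i hi]]
  exact counit_right_collapse r


section conv

/-- convolution product on `Hom(H, H ⊗ H)`. -/
def convA (F G : H →ₗ[K] H ⊗[K] H) : H →ₗ[K] H ⊗[K] H :=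
  LinearMap.mul' K (H ⊗[K] H) ∘ₗ (TensorProduct.map F G) ∘ₗ comul

lemma convA_repr (F G : H →ₗ[K] H ⊗[K] H) (x : H) {ι : Type*} (r : Coalgebra.Repr K x ι) :
    convA F G x = ∑ i ∈ r.index, F (r.left i) * G (r.right i) := by
  show (LinearMap.mul' K _) ((TensorProduct.map F G) (comul x)) = _
  rw [← r.eq]
  simp [map_sum]

lemma convA_assoc (F G P : H →ₗ[K] H ⊗[K] H) :
    convA (convA F G) P = convA F (convA G P) := by
  ext c
  classical
  set r := Coalgebra.Repr.arbitrary K c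
  set a₁ : (i : r.ι) → Coalgebra.Repr K (r.left i) (H × H) := fun i => Coalgebra.Repr.arbitrary K _
  set a₂ : (i : r.ι) → Coalgebra.Repr K (r.right i) (H × H) := fun i => Coalgebra.Repr.arbitrary K _
  have key := Coalgebra.sum_map_tmul_tmul_eq F G P c (repr := r) (a₁ := a₁) (a₂ := a₂)
  have hmap := congrArg (fun z => (LinearMap.mul' K (H ⊗[K] H) ∘ₗ
    (LinearMap.mul' K (H ⊗[K] H)).lTensor (H ⊗[K] H)) z) key
  simp only [map_sum, LinearMap.coe_comp, Function.comp_apply, LinearMap.lTensor_tmul,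
    LinearMap.mul'_apply] at hmap
  rw [convA_repr _ _ _ r, convA_repr _ _ _ r]
  calc ∑ i ∈ r.index, convA F G (r.left i) * P (r.right i)
      = ∑ i ∈ r.index, ∑ j ∈ (a₁ i).index,
          F ((a₁ i).left j) * (G ((a₁ i).right j) * P (r.right i)) := by
        refine Finset.sum_congr rfl fun i _ => ?_
        rw [convA_repr _ _ _ (a₁ i), Finset.sum_mul]
        exact Finset.sum_congr rfl fun j _ => mul_assoc _ _ _
    _ = ∑ i ∈ r.index, ∑ j ∈ (a₂ i).index,
          F (r.left i) * (G ((a₂ i).left j) * P ((a₂ i).right j)) := hmap.symm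
    _ = ∑ i ∈ r.index, F (r.left i) * convA G P (r.right i) := by
        refine Finset.sum_congr rfl fun i _ => ?_
        rw [convA_repr _ _ _ (a₂ i), Finset.mul_sum]

/-- the convolution unit of `Hom(H, H ⊗ H)`. -/
def eA : H →ₗ[K] H ⊗[K] H :=
  (Algebra.linearMap K (H ⊗[K] H)) ∘ₗ (counit (R := K) (A := H))

lemma eA_apply (x : H) : eA (K := K) (H := H) x =
    counit (R := K) x • (1 : H ⊗[K] H) := by
  simp [eA, Algebra.algebraMap_eq_smul_one]

lemma convA_one_left (F : H →ₗ[K] H ⊗[K] H) : convA eA F = F := by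
  ext c
  classical
  set r := Coalgebra.Repr.arbitrary K c
  rw [convA_repr _ _ _ r]
  have : ∀ i ∈ r.index, eA (K := K) (H := H) (r.left i) * F (r.right i)
      = F (counit (R := K) (r.left i) • r.right i) := by
    intro i _
    rw [eA_apply, smul_mul_assoc, one_mul, map_smul]
  rw [Finset.sum_congr rfl this, ← map_sum, counit_left_collapse r]

lemma convA_one_right (F : H →ₗ[K] H ⊗[K] H) : convA F eA = F := by
  ext c
  classical
  set r := Coalgebra.Repr.arbitrary K c
  rw [convA_repr _ _ _ r]
  have : ∀ i ∈ r.index, F (r.left i) * eA (K := K) (H := H) (r.right i)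
      = F (counit (R := K) (r.right i) • r.left i) := by
    intro i _
    rw [eA_apply, mul_smul_comm, mul_one, map_smul]
  rw [Finset.sum_congr rfl this, ← map_sum, counit_right_collapse r]

lemma convA_comulS_comul :
    convA ((comul (R := K) (A := H)) ∘ₗ Sa) (comul (R := K) (A := H)) = eA := by
  ext x
  classical
  set r := Coalgebra.Repr.arbitrary K x
  rw [convA_repr _ _ _ r]
  simp only [LinearMap.coe_comp, Function.comp_apply]
  have : ∀ i ∈ r.index, comul (R := K) (Sa (r.left i)) * comul (R := K) (r.right i)
      = comul (R := K) (Sa (r.left i) * r.right i) := fun i _ =>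
    (Bialgebra.comul_mul _ _).symm
  rw [Finset.sum_congr rfl this, ← map_sum, HopfAlgebra.sum_antipode_mul_eq_algebraMap_counit (R := K) r,
    Bialgebra.comul_algebraMap]
  rfl

/-- `∑ u₁ ⊗ u₂ S(u₃) = u ⊗ 1`. -/
lemma lemQ (u : H) {ι : Type*} (ru : Coalgebra.Repr K u ι) :
    ∑ j ∈ ru.index, comul (R := K) (ru.left j) * ((1 : H) ⊗ₜ[K] Sa (ru.right j))
      = u ⊗ₜ[K] (1 : H) := by
  classical
  set b₁ : (j : ru.ι) → Coalgebra.Repr K (ru.left j) (H × H) := fun j => Coalgebra.Repr.arbitrary K _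
  set b₂ : (j : ru.ι) → Coalgebra.Repr K (ru.right j) (H × H) := fun j => Coalgebra.Repr.arbitrary K _
  set VQ : H ⊗[K] (H ⊗[K] H) →ₗ[K] H ⊗[K] H :=
    LinearMap.lTensor H ((LinearMap.mul' K H) ∘ₗ (LinearMap.lTensor H Sa)) with hVQ
  have hVQa : ∀ (a b c : H), VQ (a ⊗ₜ[K] (b ⊗ₜ[K] c)) = a ⊗ₜ[K] (b * Sa c) := by
    intro a b c
    simp [hVQ]
  have key := congrArg VQ (Coalgebra.sum_tmul_tmul_eq ru b₁ b₂)
  rw [map_sum, map_sum] at key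
  simp only [map_sum, hVQa] at key
  have hA : ∑ j ∈ ru.index, ∑ m ∈ (b₁ j).index,
      (b₁ j).left m ⊗ₜ[K] ((b₁ j).right m * Sa (ru.right j))
      = ∑ j ∈ ru.index, comul (R := K) (ru.left j) * ((1 : H) ⊗ₜ[K] Sa (ru.right j)) := by
    refine Finset.sum_congr rfl fun j _ => ?_
    rw [← (b₁ j).eq, Finset.sum_mul]
    exact Finset.sum_congr rfl fun m _ => by
      rw [Algebra.TensorProduct.tmul_mul_tmul, mul_one]
  have hB : ∑ j ∈ ru.index, ∑ m ∈ (b₂ j).index,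
      ru.left j ⊗ₜ[K] ((b₂ j).left m * Sa ((b₂ j).right m))
      = u ⊗ₜ[K] (1 : H) := by
    have h1 : ∀ j ∈ ru.index, ∑ m ∈ (b₂ j).index,
        ru.left j ⊗ₜ[K] ((b₂ j).left m * Sa ((b₂ j).right m))
        = counit (R := K) (ru.right j) • (ru.left j ⊗ₜ[K] (1 : H)) := by
      intro j _
      rw [← TensorProduct.tmul_sum, HopfAlgebra.sum_mul_antipode_eq_smul (R := K) (b₂ j),
        TensorProduct.tmul_smul]
    rw [Finset.sum_congr rfl h1]
    calc ∑ j ∈ ru.index, counit (R := K) (ru.right j) • (ru.left j ⊗ₜ[K] (1 : H))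
        = ∑ j ∈ ru.index, (counit (R := K) (ru.right j) • ru.left j) ⊗ₜ[K] (1 : H) :=
          Finset.sum_congr rfl fun j _ => (TensorProduct.smul_tmul' _ _ _).symm
      _ = (∑ j ∈ ru.index, counit (R := K) (ru.right j) • ru.left j) ⊗ₜ[K] (1 : H) :=
          (TensorProduct.sum_tmul _ _ _).symm
      _ = u ⊗ₜ[K] (1 : H) := by rw [counit_right_collapse ru]
  rw [hA] at key
  rw [key, hB]


lemma convA_comul_twist :
    convA (comul (R := K) (A := H))
      ((TensorProduct.map Sa Sa) ∘ₗ (TensorProduct.comm K H H).toLinearMap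
        ∘ₗ (comul (R := K) (A := H))) = eA := by
  ext x
  classical
  set r := Coalgebra.Repr.arbitrary K x
  set b₁ : (i : r.ι) → Coalgebra.Repr K (r.left i) (H × H) := fun i => Coalgebra.Repr.arbitrary K _
  set b₂ : (i : r.ι) → Coalgebra.Repr K (r.right i) (H × H) := fun i => Coalgebra.Repr.arbitrary K _
  set V : H ⊗[K] (H ⊗[K] H) →ₗ[K] H ⊗[K] H :=
    (LinearMap.mul' K (H ⊗[K] H)) ∘ₗ
      (TensorProduct.map (comul (R := K))
        ((TensorProduct.map Sa Sa) ∘ₗ (TensorProduct.comm K H H).toLinearMap)) with hV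
  have hVa : ∀ (a b c : H),
      V (a ⊗ₜ[K] (b ⊗ₜ[K] c)) = comul (R := K) a * (Sa c ⊗ₜ[K] Sa b) := by
    intro a b c
    simp [hV]
  have key := congrArg V (Coalgebra.sum_tmul_tmul_eq r b₁ b₂)
  rw [map_sum, map_sum] at key
  simp only [map_sum, hVa] at key
  have hB : ∑ i ∈ r.index, ∑ j ∈ (b₂ i).index,
      comul (R := K) (r.left i) * (Sa ((b₂ i).right j) ⊗ₜ[K] Sa ((b₂ i).left j))
      = convA (comul (R := K) (A := H))
        ((TensorProduct.map Sa Sa) ∘ₗ (TensorProduct.comm K H H).toLinearMap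
          ∘ₗ (comul (R := K) (A := H))) x := by
    rw [convA_repr _ _ x r]
    refine Finset.sum_congr rfl fun i _ => ?_
    simp only [LinearMap.coe_comp, Function.comp_apply, LinearEquiv.coe_coe]
    rw [← (b₂ i).eq, map_sum, map_sum, Finset.mul_sum]
    exact Finset.sum_congr rfl fun j _ => by
      rw [TensorProduct.comm_tmul, TensorProduct.map_tmul]
  have hA : ∑ i ∈ r.index, ∑ j ∈ (b₁ i).index,
      comul (R := K) ((b₁ i).left j) * (Sa (r.right i) ⊗ₜ[K] Sa ((b₁ i).right j))
      = eA (K := K) (H := H) x := by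
    have h1 : ∀ i ∈ r.index, ∑ j ∈ (b₁ i).index,
        comul (R := K) ((b₁ i).left j) * (Sa (r.right i) ⊗ₜ[K] Sa ((b₁ i).right j))
        = (r.left i * Sa (r.right i)) ⊗ₜ[K] (1 : H) := by
      intro i _
      have h2 : ∀ j ∈ (b₁ i).index,
          comul (R := K) ((b₁ i).left j) * (Sa (r.right i) ⊗ₜ[K] Sa ((b₁ i).right j))
          = (comul (R := K) ((b₁ i).left j) * ((1 : H) ⊗ₜ[K] Sa ((b₁ i).right j)))
              * (Sa (r.right i) ⊗ₜ[K] (1 : H)) := by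
        intro j _
        rw [mul_assoc, Algebra.TensorProduct.tmul_mul_tmul, one_mul, mul_one]
      rw [Finset.sum_congr rfl h2, ← Finset.sum_mul, lemQ (r.left i) (b₁ i),
        Algebra.TensorProduct.tmul_mul_tmul, mul_one]
    rw [Finset.sum_congr rfl h1, ← TensorProduct.sum_tmul,
      HopfAlgebra.sum_mul_antipode_eq_algebraMap_counit (R := K) r, eA]
    simp only [LinearMap.coe_comp, Function.comp_apply, Algebra.linearMap_apply]
    rw [Algebra.TensorProduct.algebraMap_apply]
  rw [hA, hB] at key
  exact key.symm

/-- The antipode is anticomultiplicative. -/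
lemma comul_antipode (u : H) :
    comul (R := K) (Sa u)
      = (TensorProduct.map Sa Sa) ((TensorProduct.comm K H H) (comul (R := K) u)) := by
  set F : H →ₗ[K] H ⊗[K] H := (comul (R := K) (A := H)) ∘ₗ Sa with hF
  set P : H →ₗ[K] H ⊗[K] H :=
    (TensorProduct.map Sa Sa) ∘ₗ (TensorProduct.comm K H H).toLinearMap
      ∘ₗ (comul (R := K) (A := H)) with hP
  have : F = P := by
    calc F = convA F eA := (convA_one_right F).symm
      _ = convA F (convA (comul (R := K) (A := H)) P) := by rw [convA_comul_twist]
      _ = convA (convA F (comul (R := K) (A := H))) P := (convA_assoc _ _ _).symm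
      _ = convA eA P := by rw [hF, convA_comulS_comul]
      _ = P := convA_one_left P
  exact LinearMap.congr_fun this u

end conv


/-- the identity `∑ t(y S(x₁)) • x₂ = ∑ t(y₂ S(x)) • y₁`, specialised to `S x = 0`. -/
lemma dagger (hI : IsLI t) {x : H} (hSx : Sa x = 0) (y : H) {ι : Type*} (rx : Coalgebra.Repr K x ι) :
    ∑ i ∈ rx.index, t (y * Sa (rx.left i)) • rx.right i = 0 := by
  classical
  set ry := Coalgebra.Repr.arbitrary K y
  set a₁ : (i : rx.ι) → Coalgebra.Repr K (rx.left i) (H × H) := fun i => Coalgebra.Repr.arbitrary K _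
  set a₂ : (i : rx.ι) → Coalgebra.Repr K (rx.right i) (H × H) := fun i => Coalgebra.Repr.arbitrary K _
  set βy : H ⊗[K] H →ₗ[K] H :=
    (Gm t) ∘ₗ (LinearMap.mulLeft K (comul (R := K) y)) ∘ₗ (TensorProduct.comm K H H).toLinearMap
    with hβ
  have hβa : ∀ p q : H, βy (p ⊗ₜ[K] q) = Gm t (comul (R := K) y * (q ⊗ₜ[K] p)) := by
    intro p q
    simp [hβ]
  set V : H ⊗[K] (H ⊗[K] H) →ₗ[K] H :=
    βy ∘ₗ (TensorProduct.map Sa ((LinearMap.mul' K H) ∘ₗ (LinearMap.rTensor H Sa))) with hV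
  have hVa : ∀ (u v w : H), V (u ⊗ₜ[K] (v ⊗ₜ[K] w)) = βy (Sa u ⊗ₜ[K] (Sa v * w)) := by
    intro u v w
    simp [hV]
  have key := congrArg V (Coalgebra.sum_tmul_tmul_eq rx a₁ a₂)
  rw [map_sum, map_sum] at key
  simp only [map_sum, hVa] at key
  have hA : ∑ i ∈ rx.index, ∑ j ∈ (a₁ i).index,
      βy (Sa ((a₁ i).left j) ⊗ₜ[K] (Sa ((a₁ i).right j) * rx.right i))
      = ∑ i ∈ rx.index, t (y * Sa (rx.left i)) • rx.right i := by
    refine Finset.sum_congr rfl fun i _ => ?_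
    have e1 : t (y * Sa (rx.left i)) • rx.right i
        = Gm t (comul (R := K) (y * Sa (rx.left i))) * rx.right i := by
      rw [E1 hI, smul_mul_assoc, one_mul]
    have e2 : comul (R := K) (y * Sa (rx.left i))
        = ∑ j ∈ (a₁ i).index,
            comul (R := K) y * (Sa ((a₁ i).right j) ⊗ₜ[K] Sa ((a₁ i).left j)) := by
      rw [Bialgebra.comul_mul, comul_antipode, ← (a₁ i).eq, map_sum, map_sum, Finset.mul_sum]
      exact Finset.sum_congr rfl fun j _ => by
        rw [TensorProduct.comm_tmul, TensorProduct.map_tmul]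
    rw [e1, e2, map_sum, Finset.sum_mul]
    refine (Finset.sum_congr rfl fun j _ => ?_).symm
    rw [hβa, Gm_mul_left ry, Gm_mul_left ry, Finset.sum_mul]
    exact Finset.sum_congr rfl fun k _ => by rw [smul_mul_assoc, mul_assoc]
  have hB : ∑ i ∈ rx.index, ∑ j ∈ (a₂ i).index,
      βy (Sa (rx.left i) ⊗ₜ[K] (Sa ((a₂ i).left j) * (a₂ i).right j))
      = 0 := by
    have h1 : ∀ i ∈ rx.index, ∑ j ∈ (a₂ i).index,
        βy (Sa (rx.left i) ⊗ₜ[K] (Sa ((a₂ i).left j) * (a₂ i).right j))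
        = βy ((counit (R := K) (rx.right i) • Sa (rx.left i)) ⊗ₜ[K] (1 : H)) := by
      intro i _
      rw [← map_sum, ← TensorProduct.tmul_sum,
        HopfAlgebra.sum_antipode_mul_eq_smul (R := K) (a₂ i), TensorProduct.tmul_smul,
        ← TensorProduct.smul_tmul']
    rw [Finset.sum_congr rfl h1, ← map_sum, ← TensorProduct.sum_tmul]
    have h2 : ∑ i ∈ rx.index, counit (R := K) (rx.right i) • Sa (rx.left i) = 0 := by
      rw [show ∑ i ∈ rx.index, counit (R := K) (rx.right i) • Sa (rx.left i)
          = Sa (∑ i ∈ rx.index, counit (R := K) (rx.right i) • rx.left i) by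
        rw [map_sum]; exact Finset.sum_congr rfl fun i _ => (map_smul _ _ _).symm]
      rw [counit_right_collapse rx, hSx]
    rw [h2, TensorProduct.zero_tmul, map_zero]
  rw [hA, hB] at key
  exact key

lemma counit_antipode (u : H) : counit (R := K) (Sa u) = counit (R := K) u := by
  have r := Coalgebra.Repr.arbitrary K u
  have h := congrArg (counit (R := K) (A := H)) (HopfAlgebra.sum_antipode_mul_eq_algebraMap_counit (R := K) r)
  rw [map_sum, Bialgebra.counit_algebraMap] at h
  have h2 : ∑ i ∈ r.index, counit (R := K) (Sa (r.left i) * r.right i)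
      = counit (R := K) (Sa u) := by
    calc ∑ i ∈ r.index, counit (R := K) (Sa (r.left i) * r.right i)
        = ∑ i ∈ r.index, counit (R := K) (Sa (counit (R := K) (r.right i) • r.left i)) := by
          refine Finset.sum_congr rfl fun i _ => ?_
          rw [Bialgebra.counit_mul, map_smul, map_smul, smul_eq_mul, mul_comm]
      _ = counit (R := K) (Sa (∑ i ∈ r.index, counit (R := K) (r.right i) • r.left i)) := by
          rw [map_sum, map_sum]
      _ = counit (R := K) (Sa u) := by rw [counit_right_collapse r]
  rw [h2] at h
  exact h

lemma antipode_inj (hI : IsLI t) (ht : t ≠ 0) {x : H} (hSx : Sa x = 0) : x = 0 := by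
  obtain ⟨s, c, hz⟩ := decompR (Module.Basis.ofVectorSpace K H) (comul (R := K) x)
  let r : Coalgebra.Repr K x _ := ⟨s, c, fun j => Module.Basis.ofVectorSpace K H j, hz.symm⟩
  have hc : ∀ j ∈ s, Sa (c j) = 0 := by
    intro j hj
    refine Jzero hI ht fun y => ?_
    have h0 := dagger hI hSx y r
    exact linearIndependent_iff'.mp (Module.Basis.ofVectorSpace K H).linearIndependent s
      (fun j => t (y * Sa (c j))) h0 j hj
  have := counit_left_collapse r
  rw [← this]
  refine Finset.sum_eq_zero fun j hj => ?_
  have : counit (R := K) (c j) = 0 := by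
    rw [← counit_antipode, hc j hj, map_zero]
  rw [show r.left j = c j from rfl, this, zero_smul]


end AntipodeBijective

variable (K H : Type) [Field K] [Ring H] [HopfAlgebra K H]

/-- The antipode of a co-Frobenius Hopf algebra is bijective. -/
theorem antipode_bijective_of_coFrobenius (h : IsCoFrobenius K H) :
    Function.Bijective (HopfAlgebra.antipode (R := K) (A := H)) := by
  obtain ⟨φ, hφ⟩ := h.1
  set t0 : DualAlg K H := φ 1 with ht0
  set t : H →ₗ[K] K := DualAlg.toLin t0 with htdef
  have hone : (1 : H) ≠ 0 := by
    intro h10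
    have hc := Bialgebra.counit_one (R := K) (A := H)
    rw [h10, map_zero] at hc
    exact zero_ne_one hc
  have htne : t ≠ 0 := by
    intro h0
    have ht00 : t0 = 0 := by
      apply DualAlg.ext
      intro c
      have : t c = 0 := by rw [h0]; rfl
      exact this
    have : φ 1 = φ 0 := by rw [map_zero, ← ht0, ht00]
    exact hone (hφ this)
  -- a `Repr` of `1`
  have hr1eq : ∑ _i ∈ (Finset.univ : Finset (Fin 1)), (1 : H) ⊗ₜ[K] (1 : H)
      = Coalgebra.comul (R := K) (1 : H) := by
    simp [Algebra.TensorProduct.one_def]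
  have hlact1 : ∀ g : DualAlg K H, g • (1 : H) = g 1 • (1 : H) := by
    intro g
    rw [smul_def',
      lact_repr g 1 ⟨(Finset.univ : Finset (Fin 1)), fun _ => 1, fun _ => 1, hr1eq⟩]
    simp
  have hsmulK : ∀ (k : K) (x : H), φ (k • x) = k • φ x := by
    intro k x
    have h1 : k • x = (k • (1 : DualAlg K H)) • x := by rw [smul_assoc, one_smul]
    rw [h1, map_smul, smul_assoc, one_smul]
  have hIsLI : IsLI t := by
    intro f
    have h2 : DualAlg.ofLin f * t0 = f 1 • t0 := by
      have h3 := φ.map_smul (DualAlg.ofLin f) 1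
      rw [hlact1 (DualAlg.ofLin f)] at h3
      rw [DualAlg.ofLin_apply] at h3
      rw [hsmulK] at h3
      rw [← ht0] at h3
      rw [h3, smul_eq_mul]
    ext c
    have r := Coalgebra.Repr.arbitrary K c
    have h4 := DualAlg.mul_repr (DualAlg.ofLin f) t0 c r
    have h5 : (LinearMap.mul' K K ∘ₗ TensorProduct.map f t ∘ₗ Coalgebra.comul) c
        = ∑ i ∈ r.index, f (r.left i) * t (r.right i) := by
      simp only [LinearMap.coe_comp, Function.comp_apply]
      rw [← r.eq]
      simp [map_sum]
    rw [h5]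
    have h6 : ∑ i ∈ r.index, f (r.left i) * t (r.right i)
        = (DualAlg.ofLin f * t0) c := by
      rw [h4]
      rfl
    rw [h6, h2]
    rfl
  constructor
  · intro a b hab
    have hs : HopfAlgebra.antipode (R := K) (a - b) = 0 := by
      rw [map_sub, hab, sub_self]
    have := antipode_inj hIsLI htne hs
    exact sub_eq_zero.mp this
  · intro a
    exact antipode_surj hIsLI htne a
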